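/- For every s ∈ ℝ, the kernel ker Q(s) equals the linear span of the union of the joint eigenspaces ker(T − λ·id) ∩ ker(S − μ·id) taken over all pairs (λ, μ) ∈ ℝ × ℝ with c_{λ,μ}(s) = 0, where c_{λ,μ}(s) := ∑_{k=0}^∞ (−1)^k s^{2k} λ^k/(2k)! − s·μ·∑_{k=0}^∞ (−1)^k s^{2k} λ^k/(2k+1)!. -/

import Mathlib

set_option maxHeartbeats 1000000
set_option synthInstance.maxHeartbeats 1000000


variable {H : Type*} [NormedAddCommGroup H] [InnerProductSpace ℝ H] [CompleteSpace H]

/-- `Dco T s = ∑_{k=0}^∞ ((-1)^k s^{2k} / (2k)!) • T^k`. -/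
noncomputable def Dco (T : H →L[ℝ] H) (s : ℝ) : H →L[ℝ] H :=
  ∑' k : ℕ, ((-1 : ℝ) ^ k * s ^ (2 * k) / (Nat.factorial (2 * k) : ℝ)) • T ^ k

/-- `Dsi T s = ∑_{k=0}^∞ ((-1)^k s^{2k} / (2k+1)!) • T^k`. -/
noncomputable def Dsi (T : H →L[ℝ] H) (s : ℝ) : H →L[ℝ] H :=
  ∑' k : ℕ, ((-1 : ℝ) ^ k * s ^ (2 * k) / (Nat.factorial (2 * k + 1) : ℝ)) • T ^ k

/-- The focal-point operator `Q(s) = Dco(s) - s • (Dsi(s) ∘ S)`. -/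
noncomputable def Qop (T S : H →L[ℝ] H) (s : ℝ) : H →L[ℝ] H :=
  Dco T s - s • (Dsi T s ∘L S)

/-- The scalar Jacobi solution
`c_{λ,μ}(s) = ∑ (-1)^k s^{2k} λ^k/(2k)! - s·μ·∑ (-1)^k s^{2k} λ^k/(2k+1)!`. -/
noncomputable def cJacobi (lam mu : ℝ) (s : ℝ) : ℝ :=
  (∑' k : ℕ, (-1 : ℝ) ^ k * s ^ (2 * k) * lam ^ k / (Nat.factorial (2 * k) : ℝ)) -
    s * mu * ∑' k : ℕ, (-1 : ℝ) ^ k * s ^ (2 * k) * lam ^ k / (Nat.factorial (2 * k + 1) : ℝ)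

/-! ### Auxiliary lemmas -/

omit [CompleteSpace H] in
lemma clm_norm_pow_le (T : H →L[ℝ] H) (k : ℕ) : ‖T ^ k‖ ≤ ‖T‖ ^ k := by
  induction k with
  | zero => rw [pow_zero, pow_zero]; exact ContinuousLinearMap.norm_id_le
  | succ n ih =>
    calc ‖T ^ (n + 1)‖ = ‖T ^ n * T‖ := by rw [pow_succ]
    _ ≤ ‖T ^ n‖ * ‖T‖ := norm_mul_le _ _
    _ ≤ ‖T‖ ^ n * ‖T‖ := by gcongr
    _ = ‖T‖ ^ (n + 1) := by rw [pow_succ]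

omit [CompleteSpace H] in
lemma focal_term_norm_le (T : H →L[ℝ] H) (s : ℝ) (k m : ℕ) (hkm : k ≤ m) :
    ‖((-1 : ℝ) ^ k * s ^ (2 * k) / (Nat.factorial m : ℝ)) • T ^ k‖
      ≤ (s ^ 2 * ‖T‖) ^ k / (Nat.factorial k : ℝ) := by
  have hfac : (Nat.factorial k : ℝ) ≤ (Nat.factorial m : ℝ) := by
    exact_mod_cast Nat.factorial_le hkm
  have hkpos : (0:ℝ) < Nat.factorial k := by positivity
  have hmpos : (0:ℝ) < Nat.factorial m := by positivity
  have h2 : ‖(-1 : ℝ) ^ k * s ^ (2 * k) / (Nat.factorial m : ℝ)‖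
      = (s ^ 2) ^ k / (Nat.factorial m : ℝ) := by
    rw [pow_mul, Real.norm_eq_abs]
    simp [abs_div, abs_mul, abs_pow, abs_of_pos hmpos, abs_of_nonneg (sq_nonneg s)]
  rw [norm_smul ((-1 : ℝ) ^ k * s ^ (2 * k) / (Nat.factorial m : ℝ)) (T ^ k), h2]
  calc (s ^ 2) ^ k / (Nat.factorial m : ℝ) * ‖T ^ k‖
      ≤ (s ^ 2) ^ k / (Nat.factorial k : ℝ) * ‖T‖ ^ k := by
        gcongr <;> first
          | positivity
          | exact clm_norm_pow_le T k
    _ = (s ^ 2 * ‖T‖) ^ k / (Nat.factorial k : ℝ) := by rw [mul_pow]; ring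

lemma focal_scalar_norm_le (s lam : ℝ) (k m : ℕ) (hkm : k ≤ m) :
    ‖(-1 : ℝ) ^ k * s ^ (2 * k) * lam ^ k / (Nat.factorial m : ℝ)‖
      ≤ (s ^ 2 * |lam|) ^ k / (Nat.factorial k : ℝ) := by
  have hfac : (Nat.factorial k : ℝ) ≤ (Nat.factorial m : ℝ) := by
    exact_mod_cast Nat.factorial_le hkm
  have hmpos : (0:ℝ) < Nat.factorial m := by positivity
  rw [pow_mul, Real.norm_eq_abs]
  simp only [abs_div, abs_mul, abs_pow, abs_neg, abs_one, one_pow, one_mul,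
    abs_of_pos hmpos, abs_of_nonneg (sq_nonneg s)]
  calc (s ^ 2) ^ k * |lam| ^ k / (Nat.factorial m : ℝ)
      ≤ (s ^ 2) ^ k * |lam| ^ k / (Nat.factorial k : ℝ) := by gcongr
    _ = (s ^ 2 * |lam|) ^ k / (Nat.factorial k : ℝ) := by rw [mul_pow]

lemma summable_Dco_terms (T : H →L[ℝ] H) (s : ℝ) :
    Summable (fun k : ℕ => ((-1 : ℝ) ^ k * s ^ (2 * k) / (Nat.factorial (2 * k) : ℝ)) • T ^ k) :=
  Summable.of_norm_bounded (Real.summable_pow_div_factorial (s ^ 2 * ‖T‖))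
    fun k => focal_term_norm_le T s k (2 * k) (by omega)

lemma summable_Dsi_terms (T : H →L[ℝ] H) (s : ℝ) :
    Summable (fun k : ℕ =>
      ((-1 : ℝ) ^ k * s ^ (2 * k) / (Nat.factorial (2 * k + 1) : ℝ)) • T ^ k) :=
  Summable.of_norm_bounded (Real.summable_pow_div_factorial (s ^ 2 * ‖T‖))
    fun k => focal_term_norm_le T s k (2 * k + 1) (by omega)

lemma summable_co_scalar (s lam : ℝ) :
    Summable (fun k : ℕ => (-1 : ℝ) ^ k * s ^ (2 * k) * lam ^ k / (Nat.factorial (2 * k) : ℝ)) :=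
  Summable.of_norm_bounded (Real.summable_pow_div_factorial (s ^ 2 * |lam|))
    fun k => focal_scalar_norm_le s lam k (2 * k) (by omega)

lemma summable_si_scalar (s lam : ℝ) :
    Summable (fun k : ℕ =>
      (-1 : ℝ) ^ k * s ^ (2 * k) * lam ^ k / (Nat.factorial (2 * k + 1) : ℝ)) :=
  Summable.of_norm_bounded (Real.summable_pow_div_factorial (s ^ 2 * |lam|))
    fun k => focal_scalar_norm_le s lam k (2 * k + 1) (by omega)

omit [CompleteSpace H] in
lemma pow_apply_eigen (T : H →L[ℝ] H) {x : H} {lam : ℝ} (h : T x = lam • x) (k : ℕ) :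
    (T ^ k) x = lam ^ k • x := by
  induction k with
  | zero => simp
  | succ n ih =>
    rw [pow_succ', ContinuousLinearMap.mul_apply, ih, map_smul, h, smul_smul, pow_succ',
      mul_comm]

lemma tsum_op_apply_eigen (T : H →L[ℝ] H) (a : ℕ → ℝ) {x : H} {lam : ℝ}
    (h : T x = lam • x)
    (hsum : Summable (fun k => a k • T ^ k))
    (hssum : Summable (fun k => a k * lam ^ k)) :
    (∑' k : ℕ, a k • T ^ k) x = (∑' k : ℕ, a k * lam ^ k) • x := by
  have h1 : (∑' k : ℕ, a k • T ^ k) x = ∑' k : ℕ, (a k • T ^ k) x :=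
    (ContinuousLinearMap.apply ℝ H x).map_tsum hsum
  rw [h1]
  have h2 : ∀ k : ℕ, (a k • T ^ k) x = (a k * lam ^ k) • x := by
    intro k
    rw [ContinuousLinearMap.smul_apply, pow_apply_eigen T h, smul_smul]
  rw [tsum_congr h2, hssum.tsum_smul_const x]

lemma Dco_apply_eigen (T : H →L[ℝ] H) (s : ℝ) {x : H} {lam : ℝ} (h : T x = lam • x) :
    Dco T s x =
      (∑' k : ℕ, (-1 : ℝ) ^ k * s ^ (2 * k) * lam ^ k / (Nat.factorial (2 * k) : ℝ)) • x := by
  unfold Dco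
  rw [tsum_op_apply_eigen T _ h (summable_Dco_terms T s)
    ((summable_co_scalar s lam).congr fun k => by ring)]
  congr 1
  exact tsum_congr fun k => by ring

lemma Dsi_apply_eigen (T : H →L[ℝ] H) (s : ℝ) {x : H} {lam : ℝ} (h : T x = lam • x) :
    Dsi T s x =
      (∑' k : ℕ, (-1 : ℝ) ^ k * s ^ (2 * k) * lam ^ k /
        (Nat.factorial (2 * k + 1) : ℝ)) • x := by
  unfold Dsi
  rw [tsum_op_apply_eigen T _ h (summable_Dsi_terms T s)
    ((summable_si_scalar s lam).congr fun k => by ring)]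
  congr 1
  exact tsum_congr fun k => by ring

lemma Qop_apply_joint_eigen (T S : H →L[ℝ] H) (s : ℝ) {x : H} {lam mu : ℝ}
    (hT : T x = lam • x) (hS : S x = mu • x) :
    Qop T S s x = cJacobi lam mu s • x := by
  unfold Qop cJacobi
  rw [ContinuousLinearMap.sub_apply, ContinuousLinearMap.smul_apply,
    ContinuousLinearMap.comp_apply, hS, map_smul, Dco_apply_eigen T s hT,
    Dsi_apply_eigen T s hT, sub_smul, smul_smul, smul_smul]

/-- commuting with a tsum -/
lemma commute_tsum (R : H →L[ℝ] H) (f : ℕ → H →L[ℝ] H) (hf : Summable f)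
    (h : ∀ k, Commute R (f k)) : Commute R (∑' k, f k) := by
  have key : ∀ y : H, R ((∑' k, f k) y) = (∑' k, f k) (R y) := by
    intro y
    have e1 : (∑' k, f k) y = ∑' k, f k y :=
      (ContinuousLinearMap.apply ℝ H y).map_tsum hf
    have e2 : (∑' k, f k) (R y) = ∑' k, f k (R y) :=
      (ContinuousLinearMap.apply ℝ H (R y)).map_tsum hf
    have hsumy : Summable (fun k => f k y) :=
      (ContinuousLinearMap.apply ℝ H y).summable hf
    rw [e1, e2, R.map_tsum hsumy]
    refine tsum_congr fun k => ?_
    have := congrArg (fun (g : H →L[ℝ] H) => g y) (h k)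
    simpa [ContinuousLinearMap.mul_apply] using this
  ext y
  simpa [ContinuousLinearMap.mul_apply] using key y

lemma commute_with_Qop (T S : H →L[ℝ] H) (s : ℝ) (R : H →L[ℝ] H)
    (hRT : Commute R T) (hRS : Commute R S) : Commute R (Qop T S s) := by
  have hco : Commute R (Dco T s) :=
    commute_tsum R _ (summable_Dco_terms T s) fun k => (hRT.pow_right k).smul_right _
  have hsi : Commute R (Dsi T s) :=
    commute_tsum R _ (summable_Dsi_terms T s) fun k => (hRT.pow_right k).smul_right _
  have hmul : Commute R (Dsi T s ∘L S) := hsi.mul_right hRS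
  unfold Qop
  exact hco.sub_right (hmul.smul_right s)

/-- a convergent series of compact operators is compact -/
lemma isCompactOperator_tsum (f : ℕ → H →L[ℝ] H) (hf : Summable f)
    (h : ∀ k, IsCompactOperator (f k)) : IsCompactOperator (∑' k, f k : H →L[ℝ] H) := by
  have hpart : ∀ n : ℕ, IsCompactOperator (∑ i ∈ Finset.range n, f i : H →L[ℝ] H) := by
    intro n
    induction n with
    | zero => simpa using isCompactOperator_zero
    | succ n ih =>
      rw [Finset.sum_range_succ]
      have := ih.add (h n)
      rwa [← ContinuousLinearMap.coe_add'] at this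
  exact isCompactOperator_of_tendsto hf.hasSum.tendsto_sum_nat
    (Filter.Eventually.of_forall hpart)

lemma isCompactOperator_Dco_sub_one (T : H →L[ℝ] H) (hTc : IsCompactOperator T) (s : ℝ) :
    IsCompactOperator (Dco T s - 1 : H →L[ℝ] H) := by
  have hsum := summable_Dco_terms T s
  have h0 : Dco T s = ((-1 : ℝ) ^ 0 * s ^ (2 * 0) / (Nat.factorial (2 * 0) : ℝ)) • T ^ 0 +
      ∑' k : ℕ, ((-1 : ℝ) ^ (k + 1) * s ^ (2 * (k + 1)) /
        (Nat.factorial (2 * (k + 1)) : ℝ)) • T ^ (k + 1) := by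
    unfold Dco
    exact hsum.tsum_eq_zero_add
  have h1 : Dco T s - 1 = ∑' k : ℕ, ((-1 : ℝ) ^ (k + 1) * s ^ (2 * (k + 1)) /
      (Nat.factorial (2 * (k + 1)) : ℝ)) • T ^ (k + 1) := by
    rw [h0]
    simp
  rw [h1]
  refine isCompactOperator_tsum _ ((summable_nat_add_iff 1).mpr hsum) fun k => ?_
  have hpow : IsCompactOperator (T ^ (k + 1) : H →L[ℝ] H) := by
    rw [pow_succ']
    have : IsCompactOperator (⇑T ∘ ⇑(T ^ k)) := hTc.comp_clm (T ^ k)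
    exact this
  exact hpow.smul _

lemma isCompactOperator_one_sub_Qop (T S : H →L[ℝ] H)
    (hTc : IsCompactOperator T) (hSc : IsCompactOperator S) (s : ℝ) :
    IsCompactOperator ((1 : H →L[ℝ] H) - Qop T S s) := by
  have heq : (1 : H →L[ℝ] H) - Qop T S s
      = s • (Dsi T s ∘L S) - (Dco T s - 1) := by
    unfold Qop
    abel
  rw [heq]
  have h2 : IsCompactOperator (s • (Dsi T s ∘L S) : H →L[ℝ] H) := by
    have : IsCompactOperator (⇑(Dsi T s) ∘ ⇑S) := hSc.continuous_comp (Dsi T s).continuous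
    exact this.smul s
  have hsub := h2.sub (isCompactOperator_Dco_sub_one T hTc s)
  rwa [← ContinuousLinearMap.coe_sub'] at hsub



/-- the kernel of `1 - K` for `K` compact is finite dimensional -/
lemma finiteDimensional_ker_one_sub_compact (Q : H →L[ℝ] H)
    (hK : IsCompactOperator ((1 : H →L[ℝ] H) - Q)) :
    FiniteDimensional ℝ (LinearMap.ker (Q : H →ₗ[ℝ] H)) := by
  set W : Submodule ℝ H := LinearMap.ker (Q : H →ₗ[ℝ] H) with hW
  have hWclosed : IsClosed (W : Set H) := ContinuousLinearMap.isClosed_ker Q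
  obtain ⟨M, hMc, hMsub⟩ :=
    (hK.image_closedBall_subset_compact (𝕜₁ := ℝ) 1 :
      ∃ M : Set H, IsCompact M ∧
        ⇑((1 : H →L[ℝ] H) - Q) '' Metric.closedBall 0 1 ⊆ M)
  have hA : IsCompact ((W : Set H) ∩ Metric.closedBall 0 1) := by
    refine hMc.of_isClosed_subset (hWclosed.inter Metric.isClosed_closedBall) ?_
    rintro x ⟨hxW, hxb⟩
    have hx0 : Q x = 0 := hxW
    have : ((1 : H →L[ℝ] H) - Q) x = x := by
      simp [ContinuousLinearMap.sub_apply, hx0]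
    exact hMsub ⟨x, hxb, this⟩
  have himg : Subtype.val '' Metric.closedBall (0 : W) 1
      = (W : Set H) ∩ Metric.closedBall 0 1 := by
    ext x
    constructor
    · rintro ⟨y, hy, rfl⟩
      rw [Metric.mem_closedBall, dist_zero_right] at hy
      exact ⟨y.2, by rwa [Metric.mem_closedBall, dist_zero_right]⟩
    · rintro ⟨hxW, hxb⟩
      rw [Metric.mem_closedBall, dist_zero_right] at hxb
      exact ⟨⟨x, hxW⟩, by rwa [Metric.mem_closedBall, dist_zero_right], rfl⟩
  have hball : IsCompact (Metric.closedBall (0 : W) 1) := by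
    rw [Topology.IsEmbedding.subtypeVal.isCompact_iff, himg]
    exact hA
  exact FiniteDimensional.of_isCompact_closedBall₀ ℝ one_pos hball

/-- For every `s ∈ ℝ`, `ker Q(s)` equals the span of the union of the
joint eigenspaces `ker (T - λ • id) ⊓ ker (S - μ • id)` over all pairs `(λ, μ)` with
`c_{λ,μ}(s) = 0`. -/
theorem Qop_ker_eq_span_joint_eigenspaces
    (T S : H →L[ℝ] H)
    (hTc : IsCompactOperator T) (hSc : IsCompactOperator S)
    (hTsa : IsSelfAdjoint T) (hSsa : IsSelfAdjoint S)
    (hcomm : T ∘L S = S ∘L T) :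
    ∀ s : ℝ, LinearMap.ker (Qop T S s : H →ₗ[ℝ] H) =
      Submodule.span ℝ (⋃ p : ℝ × ℝ, ⋃ (_ : cJacobi p.1 p.2 s = 0),
        ((LinearMap.ker ((T - p.1 • (1 : H →L[ℝ] H) : H →L[ℝ] H) : H →ₗ[ℝ] H) ⊓
          LinearMap.ker ((S - p.2 • (1 : H →L[ℝ] H) : H →L[ℝ] H) : H →ₗ[ℝ] H) : Submodule ℝ H) : Set H)) := by
  intro s
  have hTS : Commute T S := hcomm
  have hcT : Commute T (Qop T S s) := commute_with_Qop T S s T (Commute.refl T) hTS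
  have hcS : Commute S (Qop T S s) := commute_with_Qop T S s S hTS.symm (Commute.refl S)
  set W : Submodule ℝ H := LinearMap.ker (Qop T S s : H →ₗ[ℝ] H) with hWdef
  haveI hfd : FiniteDimensional ℝ W :=
    finiteDimensional_ker_one_sub_compact _ (isCompactOperator_one_sub_Qop T S hTc hSc s)
  have hmemW : ∀ x : H, x ∈ W ↔ Qop T S s x = 0 := fun x => LinearMap.mem_ker
  have hinv : ∀ (R : H →L[ℝ] H), Commute R (Qop T S s) → ∀ x ∈ W, R x ∈ W := by
    intro R hR x hx
    rw [hmemW] at hx ⊢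
    have h1 := congrArg (fun g : H →L[ℝ] H => g x) hR.eq
    simp only [ContinuousLinearMap.mul_apply] at h1
    rw [← h1, hx, map_zero]
  have hTW : ∀ x ∈ W, T x ∈ W := hinv T hcT
  have hSW : ∀ x ∈ W, S x ∈ W := hinv S hcS
  let T' : W →ₗ[ℝ] W := (T : H →ₗ[ℝ] H).restrict hTW
  let S' : W →ₗ[ℝ] W := (S : H →ₗ[ℝ] H).restrict hSW
  have hT'coe : ∀ v : W, ((T' v : W) : H) = T (v : H) := fun v => rfl
  have hS'coe : ∀ v : W, ((S' v : W) : H) = S (v : H) := fun v => rfl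
  have hT'sym : T'.IsSymmetric := by
    intro u v
    rw [Submodule.coe_inner, Submodule.coe_inner, hT'coe, hT'coe]
    exact hTsa.isSymmetric (u : H) (v : H)
  have hS'sym : S'.IsSymmetric := by
    intro u v
    rw [Submodule.coe_inner, Submodule.coe_inner, hS'coe, hS'coe]
    exact hSsa.isSymmetric (u : H) (v : H)
  have hcomm' : Commute T' S' := by
    apply LinearMap.ext
    intro u
    apply Subtype.ext
    show T (S (u : H)) = S (T (u : H))
    have h1 := congrArg (fun g : H →L[ℝ] H => g (u : H)) hcomm
    simpa using h1
  have htop :=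
    LinearMap.IsSymmetric.iSup_iSup_eigenspace_inf_eigenspace_eq_top_of_commute
      hT'sym hS'sym hcomm'
  apply le_antisymm
  · -- ker ≤ span
    have hle' : Submodule.map W.subtype
        (⨆ α : ℝ, ⨆ γ : ℝ, Module.End.eigenspace T' α ⊓ Module.End.eigenspace S' γ)
        ≤ Submodule.span ℝ (⋃ p : ℝ × ℝ, ⋃ (_ : cJacobi p.1 p.2 s = 0),
          ((LinearMap.ker ((T - p.1 • (1 : H →L[ℝ] H) : H →L[ℝ] H) : H →ₗ[ℝ] H) ⊓
            LinearMap.ker ((S - p.2 • (1 : H →L[ℝ] H) : H →L[ℝ] H) : H →ₗ[ℝ] H) : Submodule ℝ H) : Set H)) := by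
      rw [Submodule.map_iSup]
      refine iSup_le fun α => ?_
      rw [Submodule.map_iSup]
      refine iSup_le fun γ => ?_
      rintro y ⟨v, ⟨hv1, hv2⟩, rfl⟩
      by_cases hv0 : (v : H) = 0
      · have hz : W.subtype v = 0 := hv0
        rw [hz]
        exact Submodule.zero_mem _
      · have hTv : T (v : H) = α • (v : H) := by
          have h := Module.End.mem_eigenspace_iff.mp hv1
          exact congrArg Subtype.val h
        have hSv : S (v : H) = γ • (v : H) := by
          have h := Module.End.mem_eigenspace_iff.mp hv2
          exact congrArg Subtype.val h
        have h0 : Qop T S s (v : H) = 0 := (hmemW _).mp v.2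
        have hc : cJacobi α γ s = 0 := by
          have h2 := Qop_apply_joint_eigen T S s hTv hSv
          rw [h0] at h2
          rcases smul_eq_zero.mp h2.symm with h | h
          · exact h
          · exact absurd h hv0
        apply Submodule.subset_span
        refine Set.mem_iUnion.mpr ⟨(α, γ), Set.mem_iUnion.mpr ⟨hc, ?_⟩⟩
        rw [SetLike.mem_coe, Submodule.mem_inf]
        constructor
        · rw [LinearMap.mem_ker]
          show (T - α • (1 : H →L[ℝ] H)) (v : H) = 0
          rw [ContinuousLinearMap.sub_apply, ContinuousLinearMap.smul_apply,
            ContinuousLinearMap.one_apply, hTv, sub_self]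
        · rw [LinearMap.mem_ker]
          show (S - γ • (1 : H →L[ℝ] H)) (v : H) = 0
          rw [ContinuousLinearMap.sub_apply, ContinuousLinearMap.smul_apply,
            ContinuousLinearMap.one_apply, hSv, sub_self]
    intro x hx
    have hx' : (⟨x, hx⟩ : W) ∈ (⊤ : Submodule ℝ W) := Submodule.mem_top
    rw [← htop] at hx'
    exact hle' ⟨⟨x, hx⟩, hx', rfl⟩
  · -- span ≤ ker
    rw [Submodule.span_le]
    rintro x hx
    rw [Set.mem_iUnion] at hx
    obtain ⟨p, hx⟩ := hx
    rw [Set.mem_iUnion] at hx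
    obtain ⟨hc, hxm⟩ := hx
    rw [SetLike.mem_coe, Submodule.mem_inf] at hxm
    obtain ⟨h1, h2⟩ := hxm
    have hTx : T x = p.1 • x := by
      have h3 := LinearMap.mem_ker.mp h1
      rw [ContinuousLinearMap.coe_coe, ContinuousLinearMap.sub_apply, ContinuousLinearMap.smul_apply,
        ContinuousLinearMap.one_apply, sub_eq_zero] at h3
      exact h3
    have hSx : S x = p.2 • x := by
      have h3 := LinearMap.mem_ker.mp h2
      rw [ContinuousLinearMap.coe_coe, ContinuousLinearMap.sub_apply, ContinuousLinearMap.smul_apply,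
        ContinuousLinearMap.one_apply, sub_eq_zero] at h3
      exact h3
    rw [SetLike.mem_coe, hmemW, Qop_apply_joint_eigen T S s hTx hSx, hc, zero_smul]
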